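/- Let r₁, r₂, r₃ > 0 with r₁ + r₂ + r₃ = 1, and fix d_ij = 1 − r_k and d_jk = 1 − r_i (the Euler Resting configuration ER ijk), so that d_ki(π) = 1 + r_j. Regarding 𝓔 as a function of θ alone, its second derivative at θ = π equals −m_k m_i (−H²/I_H(π)² + 1/(1 + r_j)³)(1 − r_k)(1 − r_i), where I_H(π) = m_i m_j (1 − r_k)² + m_j m_k (1 − r_i)² + m_k m_i (1 + r_j)² + I_S. In particular this second derivative is strictly positive (the Euler Resting configuration is energetically stable in θ) if and only if H² > I_H(π)²/(1 + r_j)³. -/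

import Mathlib

/-- Third side from the law of cosines. -/
noncomputable def dki (dij djk θ : ℝ) : ℝ :=
  Real.sqrt (dij ^ 2 + djk ^ 2 - 2 * dij * djk * Real.cos θ)

/-- Moment of inertia about the rotation axis. -/
noncomputable def IH (mi mj mk IS dij djk θ : ℝ) : ℝ :=
  mi * mj * dij ^ 2 + mj * mk * djk ^ 2 + mk * mi * (dki dij djk θ) ^ 2 + IS

/-- The amended potential `𝓔 = H²/(2 I_H) + U` as a function of
`(d_ij, d_jk, θ)`. -/
noncomputable def amended (mi mj mk IS H dij djk θ : ℝ) : ℝ :=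
  H ^ 2 / (2 * IH mi mj mk IS dij djk θ)
    - (mi * mj / dij + mj * mk / djk + mk * mi / dki dij djk θ)

/-- Squared third side as a function of the angle. -/
noncomputable def sAux (a b θ : ℝ) : ℝ :=
  a ^ 2 + b ^ 2 - 2 * a * b * Real.cos θ

lemma sAux_hasDerivAt (a b θ : ℝ) :
    HasDerivAt (fun t => sAux a b t) (2 * a * b * Real.sin θ) θ := by
  have h := ((Real.hasDerivAt_cos θ).const_mul (2 * a * b)).const_sub (a ^ 2 + b ^ 2)
  simp only [sAux]
  refine h.congr_deriv ?_
  ring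

lemma sAux_nonneg (a b θ : ℝ) (ha : 0 < a) (hb : 0 < b) : 0 ≤ sAux a b θ := by
  have h1 : Real.cos θ ≤ 1 := Real.cos_le_one θ
  have h2 : 0 < a * b := mul_pos ha hb
  have h3 : a * b * Real.cos θ ≤ a * b * 1 := by
    apply mul_le_mul_of_nonneg_left h1 h2.le
  simp only [sAux]
  nlinarith [sq_nonneg (a - b)]

lemma sAux_pos (a b θ : ℝ) (ha : 0 < a) (hb : 0 < b) (hθ : Real.cos θ < 1) :
    0 < sAux a b θ := by
  have h2 : 0 < a * b := mul_pos ha hb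
  have h3 : a * b * Real.cos θ < a * b * 1 := by
    apply mul_lt_mul_of_pos_left hθ h2
  simp only [sAux]
  nlinarith [sq_nonneg (a - b)]

/-- The amended potential, rewritten without `dki` inside `IH`. -/
noncomputable def gAux (mi mj mk IS H a b θ : ℝ) : ℝ :=
  H ^ 2 / (2 * (mi * mj * a ^ 2 + mj * mk * b ^ 2 + mk * mi * sAux a b θ + IS))
    - (mi * mj / a + mj * mk / b + mk * mi / Real.sqrt (sAux a b θ))

/-- First variation of the amended potential in the angle. -/
noncomputable def FAux (mi mj mk IS H a b θ : ℝ) : ℝ :=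
  2 * a * b * Real.sin θ *
    (mk * mi / (2 * (Real.sqrt (sAux a b θ)) ^ 3)
      - H ^ 2 * (mk * mi) /
          (2 * (mi * mj * a ^ 2 + mj * mk * b ^ 2 + mk * mi * sAux a b θ + IS) ^ 2))

lemma amended_eq_gAux (mi mj mk IS H a b : ℝ) (ha : 0 < a) (hb : 0 < b) :
    (fun t => amended mi mj mk IS H a b t) = fun t => gAux mi mj mk IS H a b t := by
  funext t
  have h2 : Real.sqrt (sAux a b t) ^ 2 = sAux a b t := Real.sq_sqrt (sAux_nonneg a b t ha hb)
  have hdk : dki a b t = Real.sqrt (sAux a b t) := rfl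
  simp only [amended, IH, gAux, hdk, h2]

lemma gAux_hasDerivAt (mi mj mk IS H a b θ : ℝ)
    (hmi : 0 < mi) (hmj : 0 < mj) (hmk : 0 < mk) (hIS : 0 < IS)
    (ha : 0 < a) (hb : 0 < b) (hθ : Real.cos θ < 1) :
    HasDerivAt (fun t => gAux mi mj mk IS H a b t) (FAux mi mj mk IS H a b θ) θ := by
  have hs : 0 < sAux a b θ := sAux_pos a b θ ha hb hθ
  have hsq : Real.sqrt (sAux a b θ) ≠ 0 := (Real.sqrt_pos.mpr hs).ne'
  have hI : 0 < mi * mj * a ^ 2 + mj * mk * b ^ 2 + mk * mi * sAux a b θ + IS := by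
    have h1 : 0 < mk * mi * sAux a b θ := mul_pos (mul_pos hmk hmi) hs
    have h2 : 0 < mi * mj * a ^ 2 := by positivity
    have h3 : 0 < mj * mk * b ^ 2 := by positivity
    linarith
  have hds := sAux_hasDerivAt a b θ
  have hIH : HasDerivAt
      (fun t => 2 * (mi * mj * a ^ 2 + mj * mk * b ^ 2 + mk * mi * sAux a b t + IS))
      (2 * (mk * mi * (2 * a * b * Real.sin θ))) θ := by
    exact (((hds.const_mul (mk * mi)).const_add (mi * mj * a ^ 2 + mj * mk * b ^ 2)).add_const
      IS).const_mul 2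
  have h1 := (hasDerivAt_const θ (H ^ 2)).div hIH (by positivity)
  have hsqrt : HasDerivAt (fun t => Real.sqrt (sAux a b t))
      ((2 * a * b * Real.sin θ) / (2 * Real.sqrt (sAux a b θ))) θ := hds.sqrt hs.ne'
  have h2 := (hasDerivAt_const θ (mk * mi)).div hsqrt hsq
  have h3 := h2.const_add (mi * mj / a + mj * mk / b)
  have h := h1.sub h3
  refine h.congr_deriv ?_
  simp only [FAux]
  set S := sAux a b θ with hS_def
  set q := Real.sqrt S with hq_def
  set J := mi * mj * a ^ 2 + mj * mk * b ^ 2 + mk * mi * S + IS with hJ_def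
  have hqne : q ≠ 0 := hsq
  have hJne : J ≠ 0 := hI.ne'
  field_simp
  ring

lemma sAux_pi (a b : ℝ) : sAux a b Real.pi = (a + b) ^ 2 := by
  simp [sAux, Real.cos_pi]; ring

set_option maxHeartbeats 1000000 in
/-- Second variation in `θ` of the amended potential at the Euler Resting
configuration ER`ijk` (`d_ij = 1 − r_k`, `d_jk = 1 − r_i`, `θ = π`, so
`d_ki = 1 + r_j`): it equals
`−m_k m_i (−H²/I_H(π)² + 1/(1+r_j)³)(1 − r_k)(1 − r_i)`, and is strictly
positive (energetic stability in `θ`) iff `H² > I_H(π)²/(1+r_j)³`. -/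
theorem euler_resting_second_variation
    (mi mj mk IS H ri rj rk : ℝ)
    (hmi : 0 < mi) (hmj : 0 < mj) (hmk : 0 < mk) (hIS : 0 < IS) (hH : 0 ≤ H)
    (hri : 0 < ri) (hrj : 0 < rj) (hrk : 0 < rk) (hsum : ri + rj + rk = 1) :
    deriv (deriv (fun t => amended mi mj mk IS H (1 - rk) (1 - ri) t)) Real.pi =
        -(mk * mi) *
          (-(H ^ 2) /
              (mi * mj * (1 - rk) ^ 2 + mj * mk * (1 - ri) ^ 2 +
                  mk * mi * (1 + rj) ^ 2 + IS) ^ 2 +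
            1 / (1 + rj) ^ 3) * (1 - rk) * (1 - ri) ∧
      (0 < deriv (deriv (fun t => amended mi mj mk IS H (1 - rk) (1 - ri) t)) Real.pi ↔
        (mi * mj * (1 - rk) ^ 2 + mj * mk * (1 - ri) ^ 2 +
            mk * mi * (1 + rj) ^ 2 + IS) ^ 2 / (1 + rj) ^ 3 < H ^ 2) := by
  have hrk1 : rk < 1 := by linarith
  have hri1 : ri < 1 := by linarith
  set a : ℝ := 1 - rk with ha_def
  set b : ℝ := 1 - ri with hb_def
  have hA : 0 < a := by rw [ha_def]; linarith
  have hB : 0 < b := by rw [hb_def]; linarith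
  have hab : a + b = 1 + rj := by rw [ha_def, hb_def]; linarith
  clear_value a b
  set U : Set ℝ := Real.cos ⁻¹' Set.Iio 1 with hU_def
  have hUopen : IsOpen U := isOpen_Iio.preimage Real.continuous_cos
  have hπU : Real.pi ∈ U := by
    rw [hU_def]
    simp [Real.cos_pi]
  have hderiv1 : ∀ θ ∈ U, deriv (fun t => amended mi mj mk IS H a b t) θ
      = FAux mi mj mk IS H a b θ := by
    intro θ hθ
    rw [amended_eq_gAux mi mj mk IS H a b hA hB]
    exact (gAux_hasDerivAt mi mj mk IS H a b θ hmi hmj hmk hIS hA hB hθ).deriv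
  have hEq : deriv (fun t => amended mi mj mk IS H a b t) =ᶠ[nhds Real.pi]
      (fun θ => FAux mi mj mk IS H a b θ) :=
    Filter.eventuallyEq_of_mem (hUopen.mem_nhds hπU) hderiv1
  have hsπ : 0 < sAux a b Real.pi := by
    rw [sAux_pi]; positivity
  have hqπ : Real.sqrt (sAux a b Real.pi) = a + b := by
    rw [sAux_pi, Real.sqrt_sq (by positivity)]
  have hds := sAux_hasDerivAt a b Real.pi
  have hsqrt : HasDerivAt (fun t => Real.sqrt (sAux a b t))
      ((2 * a * b * Real.sin Real.pi) / (2 * Real.sqrt (sAux a b Real.pi))) Real.pi :=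
    hds.sqrt hsπ.ne'
  have hsq3 := (hsqrt.pow 3).const_mul 2
  have hterm1 := (hasDerivAt_const Real.pi (mk * mi)).div hsq3
    (by simp only [Pi.pow_apply]; rw [hqπ]; positivity)
  have hI : HasDerivAt
      (fun t => mi * mj * a ^ 2 + mj * mk * b ^ 2 + mk * mi * sAux a b t + IS)
      (mk * mi * (2 * a * b * Real.sin Real.pi)) Real.pi :=
    ((hds.const_mul (mk * mi)).const_add (mi * mj * a ^ 2 + mj * mk * b ^ 2)).add_const IS
  have hIpos : 0 < mi * mj * a ^ 2 + mj * mk * b ^ 2 + mk * mi * sAux a b Real.pi + IS := by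
    have h1 : 0 < mk * mi * sAux a b Real.pi := mul_pos (mul_pos hmk hmi) hsπ
    have h2 : 0 < mi * mj * a ^ 2 := by positivity
    have h3 : 0 < mj * mk * b ^ 2 := by positivity
    linarith
  have hI2 := (hI.pow 2).const_mul 2
  have hterm2 := (hasDerivAt_const Real.pi (H ^ 2 * (mk * mi))).div hI2 (by simp only [Pi.pow_apply]; positivity)
  have hG := hterm1.sub hterm2
  have hsin : HasDerivAt (fun t : ℝ => 2 * a * b * Real.sin t)
      (2 * a * b * Real.cos Real.pi) Real.pi := (Real.hasDerivAt_sin Real.pi).const_mul (2 * a * b)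
  have hF := hsin.mul hG
  have hdd : deriv (deriv (fun t => amended mi mj mk IS H a b t)) Real.pi
      = deriv (fun θ => FAux mi mj mk IS H a b θ) Real.pi := hEq.deriv_eq
  have hFd : deriv (fun θ => FAux mi mj mk IS H a b θ) Real.pi = _ := hF.deriv
  have hmain : deriv (deriv (fun t => amended mi mj mk IS H a b t)) Real.pi =
      -(mk * mi) *
        (-(H ^ 2) / (mi * mj * a ^ 2 + mj * mk * b ^ 2 + mk * mi * (1 + rj) ^ 2 + IS) ^ 2 +
          1 / (1 + rj) ^ 3) * a * b := by
    rw [hdd, hFd]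
    simp only [Real.sin_pi, Real.cos_pi, mul_zero, zero_mul, zero_div, add_zero, sub_zero,
      zero_sub, div_zero, neg_zero, Pi.div_apply, Pi.sub_apply, Pi.pow_apply]
    rw [hqπ, sAux_pi, ← hab]
    set J := mi * mj * a ^ 2 + mj * mk * b ^ 2 + mk * mi * (a + b) ^ 2 + IS with hJ_def
    have hJpos : 0 < J := by rw [hJ_def]; positivity
    have habpos : 0 < a + b := by linarith
    have hJne : J ≠ 0 := hJpos.ne'
    have habne : a + b ≠ 0 := habpos.ne'
    clear_value J
    field_simp
    ring
  refine ⟨hmain, ?_⟩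
  rw [hmain, ← hab]
  set J := mi * mj * a ^ 2 + mj * mk * b ^ 2 + mk * mi * (a + b) ^ 2 + IS with hJ_def
  have hJpos : 0 < J := by rw [hJ_def]; positivity
  clear_value J
  have habpos : 0 < a + b := by linarith
  have hPpos : 0 < (a + b) ^ 3 := by positivity
  have hden : 0 < J ^ 2 * (a + b) ^ 3 := by positivity
  have key : -(mk * mi) * (-(H ^ 2) / J ^ 2 + 1 / (a + b) ^ 3) * a * b
      = mk * mi * a * b * (H ^ 2 * (a + b) ^ 3 - J ^ 2) / (J ^ 2 * (a + b) ^ 3) := by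
    field_simp
    ring
  rw [key, lt_div_iff₀ hden, zero_mul, div_lt_iff₀ hPpos]
  have hK : 0 < mk * mi * a * b := by
    have := mul_pos (mul_pos (mul_pos hmk hmi) hA) hB
    exact this
  clear hF hG hFd hdd hEq hderiv1 hterm1 hterm2 hsq3 hI hI2 hsqrt hds hsin hmain hIpos
  constructor
  · intro h
    nlinarith [hK, h]
  · intro h
    nlinarith [hK, h]
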